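/- arXiv:1510.08488 — 4 statements merged into one kernel-verified Lean document; each statement's English description precedes it below -/
import Mathlib

section
/- Let n ≥ 6 be even and let G be a graph of order 5n/2 − 1 containing no W_n whose complement contains no S_n. Then the clique number of the complement of G is at most n − 2. -/
open SimpleGraph

/-- `H` contains a copy of `G` (a subgraph isomorphic to `G`). -/
def Contains {α β : Type*} (H : SimpleGraph α) (G : SimpleGraph β) : Prop :=
  ∃ f : β ↪ α, ∀ u v, G.Adj u v → H.Adj (f u) (f v)

/-- Every graph on `N` vertices contains `G` or its complement contains `H`. -/
def RamseyProp {α β : Type*} (G : SimpleGraph α) (H : SimpleGraph β) (N : ℕ) : Prop :=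
  ∀ K : SimpleGraph (Fin N), Contains K G ∨ Contains Kᶜ H

/-- The Ramsey number of `G` versus `H`. -/
noncomputable def ramseyNumber {α β : Type*} (G : SimpleGraph α) (H : SimpleGraph β) : ℕ :=
  sInf {N | RamseyProp G H N}

/-- The wheel `W_n = C_n + K_1`: a cycle `C_n` plus a hub adjacent to all cycle vertices. -/
def wheelGraph (n : ℕ) : SimpleGraph (Option (Fin n)) :=
  SimpleGraph.fromRel
    (fun u v => u = none ∨ ∃ a b, u = some a ∧ v = some b ∧ (SimpleGraph.cycleGraph n).Adj a b)

/-- The star `S_n = K_{1,n-1}` on `n` vertices. -/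
def starGraph (n : ℕ) : SimpleGraph (Fin 1 ⊕ Fin (n - 1)) :=
  completeBipartiteGraph (Fin 1) (Fin (n - 1))

/-- `G` has a cycle of length `ℓ`. -/
def HasCycleLength {α : Type*} (G : SimpleGraph α) (ℓ : ℕ) : Prop :=
  ∃ (v : α) (c : G.Walk v v), c.IsCycle ∧ c.length = ℓ

/-- Circumference: the length of a longest cycle of `G`. -/
noncomputable def circumference {α : Type*} (G : SimpleGraph α) : ℕ :=
  sSup {ℓ | HasCycleLength G ℓ}

/-- `G` is 2-connected: at least 3 vertices and deleting any vertex leaves a connected graph. -/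
def TwoConnected {α : Type*} (G : SimpleGraph α) : Prop :=
  3 ≤ Nat.card α ∧ ∀ v : α, (G.induce {w | w ≠ v}).Connected

lemma contains_star' {V : Type*} (H : SimpleGraph V) (n : ℕ) (v : V)
    (T : Finset V) (hT : T.card = n - 1) (hadj : ∀ w ∈ T, H.Adj v w) :
    Contains H (_root_.starGraph n) := by
  classical
  let g : Fin (n - 1) → V := fun i => (T.equivFin.symm (finCongr hT.symm i) : V)
  have hgT : ∀ i, g i ∈ T := fun i => (T.equivFin.symm (finCongr hT.symm i)).2
  have hginj : Function.Injective g := fun i j hij =>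
    (finCongr hT.symm).injective (T.equivFin.symm.injective (Subtype.val_injective hij))
  have hne : ∀ i, v ≠ g i := fun i h => (H.ne_of_adj (hadj _ (hgT i))) h
  refine ⟨⟨Sum.elim (fun _ => v) g, ?_⟩, ?_⟩
  · intro x y hxy
    match x, y with
    | Sum.inl x, Sum.inl y => exact congrArg Sum.inl (Subsingleton.elim x y)
    | Sum.inl x, Sum.inr y => exact absurd hxy (hne y)
    | Sum.inr x, Sum.inl y => exact absurd hxy.symm (hne x)
    | Sum.inr x, Sum.inr y => exact congrArg Sum.inr (hginj hxy)
  · intro x y hxy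
    match x, y with
    | Sum.inl x, Sum.inr y => exact hadj _ (hgT y)
    | Sum.inr x, Sum.inl y => exact (hadj _ (hgT x)).symm
    | Sum.inl x, Sum.inl y => simp [_root_.starGraph] at hxy
    | Sum.inr x, Sum.inr y => simp [_root_.starGraph] at hxy

lemma cycle_parity' {n : ℕ} (hn : 6 ≤ n) (he : Even n) {u v : Fin n}
    (h : (SimpleGraph.cycleGraph n).Adj u v) : u.val % 2 ≠ v.val % 2 := by
  haveI : NeZero n := ⟨by omega⟩
  rw [cycleGraph_adj'] at h
  have h1 : (1 : Fin n).val = 1 := by rw [Fin.val_one', Nat.mod_eq_of_lt (by omega)]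
  obtain ⟨k, hk⟩ := he
  have key : ∀ a b : Fin n, (a - b).val = 1 → a.val % 2 ≠ b.val % 2 := by
    intro a b hab
    have hab' : a - b = 1 := Fin.ext (by rw [h1]; exact hab)
    have ha : a = b + 1 := by rw [sub_eq_iff_eq_add] at hab'; rw [hab', add_comm]
    have hval : a.val = (b.val + 1) % n := by rw [ha, Fin.add_def, h1]
    have hb := b.isLt
    rcases Nat.lt_or_ge (b.val + 1) n with hlt | hge
    · rw [Nat.mod_eq_of_lt hlt] at hval; omega
    · have hn' : b.val + 1 = n := by omega
      rw [hn', Nat.mod_self] at hval; omega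
  rcases h with h | h
  · exact key u v h
  · exact fun hc => key v u h hc.symm


/-- Under the standing hypotheses, ω(Gᶜ) ≤ n − 2. -/
theorem stmt8 {V : Type*} [Fintype V] (G : SimpleGraph V)
    (n : ℕ) (hn : 6 ≤ n) (he : Even n)
    (hcard : Fintype.card V = 5 * n / 2 - 1)
    (hW : ¬ Contains G (wheelGraph n))
    (hS : ¬ Contains Gᶜ (_root_.starGraph n)) :
    Gᶜ.cliqueNum ≤ n - 2 := by
  classical
  have hdeg : ∀ v : V, (Gᶜ.neighborFinset v).card ≤ n - 2 := by
    intro v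
    by_contra hv
    push_neg at hv
    have hle : n - 1 ≤ (Gᶜ.neighborFinset v).card := by omega
    obtain ⟨T, hT, hTcard⟩ := Finset.exists_subset_card_eq hle
    exact hS (contains_star' _ n v T hTcard
      (fun w hw => (mem_neighborFinset _ _ _).mp (hT hw)))
  have hclq : ∀ s : Finset V, ¬ Gᶜ.IsNClique (n - 1) s := by
    intro s hs
    have hscard : s.card = n - 1 := hs.2
    have key : ∀ v ∈ s, ∀ w, w ∉ s → G.Adj v w := by
      intro v hv w hw
      have hsub : s.erase v ⊆ Gᶜ.neighborFinset v := by
        intro x hx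
        rw [mem_neighborFinset]
        exact hs.1 hv (Finset.mem_of_mem_erase hx) (Finset.ne_of_mem_erase hx).symm
      have hecard : (s.erase v).card = n - 2 := by
        rw [Finset.card_erase_of_mem hv, hscard]; omega
      have heq : s.erase v = Gᶜ.neighborFinset v :=
        Finset.eq_of_subset_of_card_le hsub (by rw [hecard]; exact hdeg v)
      have hwn : w ∉ Gᶜ.neighborFinset v := by
        rw [← heq]; exact fun hc => hw (Finset.mem_of_mem_erase hc)
      rw [mem_neighborFinset, compl_adj] at hwn
      push_neg at hwn
      exact hwn (fun h => hw (h ▸ hv))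
    obtain ⟨k, hk⟩ := he
    have hVc : Fintype.card V = 5 * k - 1 := by rw [hcard]; omega
    have houtcard : (Finset.univ \ s).card = 3 * k := by
      rw [Finset.card_sdiff_of_subset (Finset.subset_univ s), Finset.card_univ, hVc, hscard]; omega
    have hpos : 0 < (Finset.univ \ s).card := by omega
    obtain ⟨h0, hh0⟩ := Finset.card_pos.mp hpos
    have hh0s : h0 ∉ s := (Finset.mem_sdiff.mp hh0).2
    set D := ((Finset.univ \ s).erase h0) \ Gᶜ.neighborFinset h0 with hDdef
    have hDprop : ∀ w ∈ D, w ∉ s ∧ G.Adj h0 w := by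
      intro w hw
      rw [hDdef, Finset.mem_sdiff, Finset.mem_erase, Finset.mem_sdiff] at hw
      obtain ⟨⟨hwne, _, hws⟩, hwn⟩ := hw
      refine ⟨hws, ?_⟩
      rw [mem_neighborFinset, compl_adj] at hwn
      push_neg at hwn
      exact hwn (Ne.symm hwne)
    have hDcard : n / 2 ≤ D.card := by
      have h1 : ((Finset.univ \ s).erase h0).card = 3 * k - 1 := by
        rw [Finset.card_erase_of_mem hh0, houtcard]
      have h2 := Finset.card_le_card_sdiff_add_card
        (s := (Finset.univ \ s).erase h0) (t := Gᶜ.neighborFinset h0)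
      have h3 := hdeg h0
      rw [← hDdef] at h2
      omega
    obtain ⟨B, hBD, hBcard⟩ := Finset.exists_subset_card_eq hDcard
    have hAle : n / 2 ≤ s.card := by omega
    obtain ⟨A, hAs, hAcard⟩ := Finset.exists_subset_card_eq hAle
    let ea : Fin (n / 2) → V := fun i => (A.equivFin.symm (finCongr hAcard.symm i) : V)
    let eb : Fin (n / 2) → V := fun i => (B.equivFin.symm (finCongr hBcard.symm i) : V)
    have hea : ∀ i, ea i ∈ s := fun i => hAs (A.equivFin.symm _).2
    have heb : ∀ i, eb i ∈ D := fun i => hBD (B.equivFin.symm _).2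
    have heainj : Function.Injective ea := fun i j hij =>
      (finCongr hAcard.symm).injective (A.equivFin.symm.injective (Subtype.val_injective hij))
    have hebinj : Function.Injective eb := fun i j hij =>
      (finCongr hBcard.symm).injective (B.equivFin.symm.injective (Subtype.val_injective hij))
    have hebs : ∀ i, eb i ∉ s := fun i => (hDprop _ (heb i)).1
    have hebadj : ∀ i, G.Adj h0 (eb i) := fun i => (hDprop _ (heb i)).2
    have hebh0 : ∀ i, eb i ≠ h0 := fun i => (G.ne_of_adj (hebadj i)).symm
    have hhalf : ∀ i : Fin n, i.val / 2 < n / 2 := fun i =>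
      Nat.div_lt_div_of_lt_of_dvd ⟨k, by omega⟩ i.isLt
    let f : Option (Fin n) → V := fun o =>
      match o with
      | none => h0
      | some i => if i.val % 2 = 0 then ea ⟨i.val / 2, hhalf i⟩ else eb ⟨i.val / 2, hhalf i⟩
    have hfs : ∀ i : Fin n,
        (i.val % 2 = 0 ∧ f (some i) = ea ⟨i.val / 2, hhalf i⟩) ∨
        (i.val % 2 = 1 ∧ f (some i) = eb ⟨i.val / 2, hhalf i⟩) := by
      intro i
      by_cases hp : i.val % 2 = 0
      · exact Or.inl ⟨hp, if_pos hp⟩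
      · exact Or.inr ⟨by omega, if_neg hp⟩
    have hfinj : Function.Injective f := by
      intro x y hxy
      match x, y with
      | none, none => rfl
      | none, some j =>
        exfalso
        rcases hfs j with ⟨_, hj⟩ | ⟨_, hj⟩
        · exact hh0s (by rw [show h0 = f (some j) from hxy, hj]; exact hea _)
        · exact hebh0 _ (hj ▸ hxy.symm)
      | some j, none =>
        exfalso
        rcases hfs j with ⟨_, hj⟩ | ⟨_, hj⟩
        · exact hh0s (by rw [show h0 = f (some j) from hxy.symm, hj]; exact hea _)
        · exact hebh0 _ (hj ▸ hxy)
      | some i, some j =>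
        rcases hfs i with ⟨hpi, hi⟩ | ⟨hpi, hi⟩ <;> rcases hfs j with ⟨hpj, hj⟩ | ⟨hpj, hj⟩
        · have h' : ea ⟨i.val / 2, hhalf i⟩ = ea ⟨j.val / 2, hhalf j⟩ := by
            rw [← hi, ← hj]; exact hxy
          have hv : i.val / 2 = j.val / 2 := congrArg Fin.val (heainj h')
          exact congrArg some (Fin.ext (by omega))
        · exact absurd (by rw [← hj, ← hxy, hi]; exact hea _) (hebs _)
        · exact absurd (by rw [← hi, hxy, hj]; exact hea _) (hebs _)
        · have h' : eb ⟨i.val / 2, hhalf i⟩ = eb ⟨j.val / 2, hhalf j⟩ := by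
            rw [← hi, ← hj]; exact hxy
          have hv : i.val / 2 = j.val / 2 := congrArg Fin.val (hebinj h')
          exact congrArg some (Fin.ext (by omega))
    have hcross : ∀ (x y : V), x ∈ s → y ∉ s → G.Adj x y := fun x y hx hy => key x hx y hy
    have hcyc : ∀ a b : Fin n, (SimpleGraph.cycleGraph n).Adj a b →
        G.Adj (f (some a)) (f (some b)) := by
      intro a b hab
      have hpar := cycle_parity' hn ⟨k, hk⟩ hab
      rcases hfs a with ⟨hpa, ha⟩ | ⟨hpa, ha⟩ <;> rcases hfs b with ⟨hpb, hb⟩ | ⟨hpb, hb⟩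
      · omega
      · rw [ha, hb]; exact hcross _ _ (hea _) (hebs _)
      · rw [ha, hb]; exact (hcross _ _ (hea _) (hebs _)).symm
      · omega
    have hhub : ∀ b : Fin n, G.Adj h0 (f (some b)) := by
      intro b
      rcases hfs b with ⟨_, hb⟩ | ⟨_, hb⟩
      · rw [hb]; exact (hcross _ _ (hea _) hh0s).symm
      · rw [hb]; exact hebadj _
    refine hW ⟨⟨f, hfinj⟩, ?_⟩
    intro u v huv
    rw [wheelGraph, fromRel_adj] at huv
    obtain ⟨hne, hrel⟩ := huv
    rcases hrel with (h | ⟨a, b, rfl, rfl, hab⟩) | (h | ⟨a, b, rfl, rfl, hab⟩)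
    · subst h
      match v, hne with
      | some j, _ => exact hhub j
      | none, hne => exact absurd rfl hne
    · exact hcyc a b hab
    · subst h
      match u, hne with
      | some j, _ => exact (hhub j).symm
      | none, hne => exact absurd rfl hne
    · exact (hcyc a b hab).symm
  have hbdd : ∀ m ∈ {m | ∃ s, Gᶜ.IsNClique m s}, m ≤ n - 2 := by
    intro m hm
    obtain ⟨s, hsm⟩ := hm
    by_contra hc
    push_neg at hc
    have hle : n - 1 ≤ s.card := by rw [hsm.2]; omega
    obtain ⟨t, hts, htcard⟩ := Finset.exists_subset_card_eq hle
    exact hclq t ⟨hsm.1.subset hts, htcard⟩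
  exact csSup_le ⟨0, ⟨∅, by simp⟩⟩ hbdd
end

section
/- Let n ≥ 6 be even and let G be a graph of order 5n/2 − 1 containing no W_n whose complement contains no S_n. Then for every vertex v of G, the induced subgraph H_v = G[N(v)] is not bipartite. -/
open SimpleGraph

open Finset in
lemma nonadj_bound {V : Type*} [Fintype V] [DecidableEq V] (G : SimpleGraph V)
    [DecidableRel G.Adj] (n : ℕ) (hn : 2 ≤ n)
    (hS : ¬ Contains Gᶜ (_root_.starGraph n)) (u : V) :
    (Finset.univ.filter (fun w => w ≠ u ∧ ¬ G.Adj u w)).card ≤ n - 2 := by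
  by_contra h
  push_neg at h
  have h' : n - 1 ≤ (Finset.univ.filter (fun w => w ≠ u ∧ ¬ G.Adj u w)).card := by omega
  obtain ⟨T, hTsub, hTcard⟩ := Finset.exists_subset_card_eq h'
  have e := T.equivFinOfCardEq hTcard
  have hT : ∀ w : T, Gᶜ.Adj u (w : V) := by
    intro w
    have := hTsub w.2
    simp only [Finset.mem_filter] at this
    exact (SimpleGraph.compl_adj G u w).2 ⟨Ne.symm this.2.1, this.2.2⟩
  apply hS
  refine ⟨⟨fun o => Sum.elim (fun _ => u) (fun i => ((e.symm i : T) : V)) o, ?_⟩, ?_⟩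
  · rintro (x | x) (y | y) hxy
    · simp [Subsingleton.elim x y]
    · simp only [Sum.elim_inl, Sum.elim_inr] at hxy
      exact absurd hxy.symm (hT (e.symm y)).ne'
    · simp only [Sum.elim_inl, Sum.elim_inr] at hxy
      exact absurd hxy (hT (e.symm x)).ne'
    · simp only [Sum.elim_inr] at hxy
      have : e.symm x = e.symm y := Subtype.ext hxy
      simpa using congrArg e this
  · rintro (x | x) (y | y) hxy <;>
      simp only [_root_.starGraph, completeBipartiteGraph_adj, Sum.isLeft_inl, Sum.isRight_inr,
        Sum.isLeft_inr, Sum.isRight_inl, and_true, true_and, and_false, false_and,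
        or_false, false_or] at hxy
    · exact absurd hxy (by simp)
    · exact hT (e.symm y)
    · exact (hT (e.symm x)).symm
    · exact absurd hxy (by simp)

open Finset in
lemma greedy_cycle {V : Type*} [DecidableEq V] (G : SimpleGraph V) [DecidableRel G.Adj]
    (k : ℕ) (hk : 3 ≤ k) (A B : Finset V) (hAB : Disjoint A B)
    (hMA : ∀ u ∈ A, ∀ S ⊆ B, A.card + (S.filter (fun w => ¬ G.Adj u w)).card ≤ 2*k - 1)
    (hMB : ∀ u ∈ B, ∀ S ⊆ A, B.card + (S.filter (fun w => ¬ G.Adj u w)).card ≤ 2*k - 1)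
    (hsum : 3*k ≤ A.card + B.card) (hA : A.Nonempty) :
    ∃ c : Fin (2*k) → V, Function.Injective c ∧ (∀ t, c t ∈ A ∪ B) ∧
      (∀ s t : Fin (2*k), (s.val + 1 = t.val ∨ (t.val = 0 ∧ s.val = 2*k - 1)) →
        G.Adj (c s) (c t)) := by
  -- basic cardinalities
  obtain ⟨a0, ha0⟩ := hA
  have hAcard : A.card ≤ 2*k - 1 := by
    have := hMA a0 ha0 ∅ (Finset.empty_subset B); simpa using this
  have hBpos : k + 1 ≤ B.card := by omega
  have hB : B.Nonempty := Finset.card_pos.mp (by omega)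
  obtain ⟨b0, hb0⟩ := hB
  have hBcard : B.card ≤ 2*k - 1 := by
    have := hMB b0 hb0 ∅ (Finset.empty_subset A); simpa using this
  have hApos : k + 1 ≤ A.card := by omega
  -- step lemma
  have step : ∀ (P Q : Finset V),
      (∀ u ∈ Q, ∀ S ⊆ P, Q.card + (S.filter (fun w => ¬ G.Adj u w)).card ≤ 2*k - 1) →
      3*k ≤ P.card + Q.card → ∀ q ∈ Q, ∀ used : Finset V, used.card ≤ k - 1 →
      ∃ y ∈ P, G.Adj q y ∧ y ∉ used := by
    intro P Q hM hs q hq used hu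
    have h1 := hM q hq P (Finset.Subset.refl P)
    have h2 := Finset.card_filter_add_card_filter_not
      (s := P) (p := fun w => G.Adj q w)
    have h4 := Finset.card_le_card_sdiff_add_card
      (s := P.filter (fun w => G.Adj q w)) (t := used)
    have h5 : 0 < ((P.filter (fun w => G.Adj q w)) \ used).card := by omega
    obtain ⟨y, hy⟩ := Finset.card_pos.mp h5
    rw [Finset.mem_sdiff, Finset.mem_filter] at hy
    exact ⟨y, hy.1.1, hy.1.2, hy.2⟩
  -- parity counting
  have hparA : ∀ m, m ≤ 2*k - 2 →
      (((range m).filter (fun i => Even i)).card ≤ k - 1) := by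
    intro m hm
    have : ((range m).filter (fun i => Even i)).card ≤ (range (k-1)).card := by
      apply Finset.card_le_card_of_injOn (fun i => i / 2)
      · intro i hi
        simp only [Finset.mem_coe, Finset.mem_filter, Finset.mem_range] at hi ⊢
        show i / 2 < k - 1
        rcases hi.2 with ⟨c, hc⟩; omega
      · intro i hi j hj hij
        simp only [Finset.coe_filter, Set.mem_setOf_eq, Finset.mem_range] at hi hj
        have hij' : i / 2 = j / 2 := hij
        rcases hi.2 with ⟨c, hc⟩; rcases hj.2 with ⟨d, hd⟩; omega
    simpa using this
  have hparB : ∀ m, m ≤ 2*k - 2 →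
      (((range m).filter (fun i => ¬ Even i)).card ≤ k - 1) := by
    intro m hm
    have : ((range m).filter (fun i => ¬ Even i)).card ≤ (range (k-1)).card := by
      apply Finset.card_le_card_of_injOn (fun i => i / 2)
      · intro i hi
        simp only [Finset.mem_coe, Finset.mem_filter, Finset.mem_range] at hi ⊢
        show i / 2 < k - 1
        have := Nat.odd_iff.mp (Nat.not_even_iff_odd.mp hi.2)
        omega
      · intro i hi j hj hij
        simp only [Finset.coe_filter, Set.mem_setOf_eq, Finset.mem_range] at hi hj
        have hij' : i / 2 = j / 2 := hij
        have h1 := Nat.odd_iff.mp (Nat.not_even_iff_odd.mp hi.2)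
        have h2 := Nat.odd_iff.mp (Nat.not_even_iff_odd.mp hj.2)
        omega
    simpa using this
  -- greedy path
  have path : ∀ m, m ≤ 2*k - 2 → ∃ x : ℕ → V,
      (∀ i, i ≤ m → ((Even i → x i ∈ A) ∧ (¬ Even i → x i ∈ B))) ∧
      (∀ i j, i ≤ m → j ≤ m → i ≠ j → x i ≠ x j) ∧
      (∀ i, i + 1 ≤ m → G.Adj (x i) (x (i+1))) := by
    intro m
    induction m with
    | zero =>
      intro _
      exact ⟨fun _ => a0, fun i hi => by
        interval_cases i
        exact ⟨fun _ => ha0, fun h => absurd (Even.zero) h⟩,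
        by omega, by omega⟩
    | succ m ih =>
      intro hm
      obtain ⟨x, hmem, hinj, hadj⟩ := ih (by omega)
      by_cases hpar : Even (m+1)
      · -- new vertex in A, x m ∈ B
        have hxmB : x m ∈ B := (hmem m (le_refl m)).2 (by
          rcases hpar with ⟨c, hc⟩
          rw [Nat.even_iff]; omega)
        set used := ((range (m+1)).filter (fun i => Even i)).image x with hused
        have husedcard : used.card ≤ k - 1 := by
          refine le_trans (Finset.card_image_le) ?_
          refine le_trans (Finset.card_le_card ?_) (hparA (2*k-2) (le_refl _))
          exact Finset.filter_subset_filter _ (Finset.range_subset_range.mpr (by omega))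
        obtain ⟨y, hyA, hyadj, hyused⟩ := step A B hMB (by omega) (x m) hxmB used husedcard
        refine ⟨fun i => if i ≤ m then x i else y, ?_, ?_, ?_⟩
        · intro i hi
          by_cases him : i ≤ m
          · simpa [him] using hmem i him
          · have : i = m + 1 := by omega
            subst this
            simp only [if_neg him]
            exact ⟨fun _ => hyA, fun h => absurd hpar h⟩
        · intro i j hi hj hij
          rcases Nat.lt_or_ge i (m+1) with hi' | hi' <;>
            rcases Nat.lt_or_ge j (m+1) with hj' | hj'
          · simpa [Nat.lt_succ_iff.mp hi', Nat.lt_succ_iff.mp hj']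
              using hinj i j (by omega) (by omega) hij
          · have hj'' : j = m + 1 := by omega
            subst hj''
            have hi'' : i ≤ m := by omega
            simp only [if_pos hi'', if_neg (by omega : ¬ m + 1 ≤ m)]
            intro heq
            by_cases hie : Even i
            · -- x i ∈ A... both in A: y ∉ used
              apply hyused
              rw [hused]
              exact Finset.mem_image.mpr ⟨i, by
                simp only [Finset.mem_filter, Finset.mem_range]
                exact ⟨by omega, hie⟩, heq⟩
            · have := (hmem i hi'').2 hie
              exact (Finset.disjoint_left.mp hAB hyA) (heq ▸ this)
          · have hi'' : i = m + 1 := by omega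
            subst hi''
            have hj'' : j ≤ m := by omega
            simp only [if_pos hj'', if_neg (by omega : ¬ m + 1 ≤ m)]
            intro heq
            by_cases hje : Even j
            · apply hyused
              rw [hused]
              exact Finset.mem_image.mpr ⟨j, by
                simp only [Finset.mem_filter, Finset.mem_range]
                exact ⟨by omega, hje⟩, heq.symm⟩
            · have := (hmem j hj'').2 hje
              exact (Finset.disjoint_left.mp hAB hyA) (heq ▸ this)
          · omega
        · intro i hi
          show G.Adj (if i ≤ m then x i else y) (if i + 1 ≤ m then x (i+1) else y)
          by_cases hi' : i + 1 ≤ m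
          · rw [if_pos (by omega : i ≤ m), if_pos hi']
            exact hadj i hi'
          · have hieq : i = m := by omega
            rw [if_pos (by omega : i ≤ m), if_neg (by omega : ¬ i + 1 ≤ m), hieq]
            exact hyadj
      · -- new vertex in B, x m ∈ A
        have hxmA : x m ∈ A := (hmem m (le_refl m)).1 (by
          rw [Nat.even_iff] at hpar ⊢; omega)
        set used := ((range (m+1)).filter (fun i => ¬ Even i)).image x with hused
        have husedcard : used.card ≤ k - 1 := by
          refine le_trans (Finset.card_image_le) ?_
          refine le_trans (Finset.card_le_card ?_) (hparB (2*k-2) (le_refl _))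
          exact Finset.filter_subset_filter _ (Finset.range_subset_range.mpr (by omega))
        obtain ⟨y, hyB, hyadj, hyused⟩ := step B A hMA (by omega) (x m) hxmA used husedcard
        refine ⟨fun i => if i ≤ m then x i else y, ?_, ?_, ?_⟩
        · intro i hi
          by_cases him : i ≤ m
          · simpa [him] using hmem i him
          · have : i = m + 1 := by omega
            subst this
            simp only [if_neg him]
            exact ⟨fun h => absurd h hpar, fun _ => hyB⟩
        · intro i j hi hj hij
          rcases Nat.lt_or_ge i (m+1) with hi' | hi' <;>
            rcases Nat.lt_or_ge j (m+1) with hj' | hj'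
          · simpa [Nat.lt_succ_iff.mp hi', Nat.lt_succ_iff.mp hj']
              using hinj i j (by omega) (by omega) hij
          · have hj'' : j = m + 1 := by omega
            subst hj''
            have hi'' : i ≤ m := by omega
            simp only [if_pos hi'', if_neg (by omega : ¬ m + 1 ≤ m)]
            intro heq
            by_cases hie : Even i
            · have := (hmem i hi'').1 hie
              exact (Finset.disjoint_right.mp hAB hyB) (heq ▸ this)
            · apply hyused
              rw [hused]
              exact Finset.mem_image.mpr ⟨i, by
                simp only [Finset.mem_filter, Finset.mem_range]
                exact ⟨by omega, hie⟩, heq⟩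
          · have hi'' : i = m + 1 := by omega
            subst hi''
            have hj'' : j ≤ m := by omega
            simp only [if_pos hj'', if_neg (by omega : ¬ m + 1 ≤ m)]
            intro heq
            by_cases hje : Even j
            · have := (hmem j hj'').1 hje
              exact (Finset.disjoint_right.mp hAB hyB) (heq ▸ this)
            · apply hyused
              rw [hused]
              exact Finset.mem_image.mpr ⟨j, by
                simp only [Finset.mem_filter, Finset.mem_range]
                exact ⟨by omega, hje⟩, heq.symm⟩
          · omega
        · intro i hi
          show G.Adj (if i ≤ m then x i else y) (if i + 1 ≤ m then x (i+1) else y)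
          by_cases hi' : i + 1 ≤ m
          · rw [if_pos (by omega : i ≤ m), if_pos hi']
            exact hadj i hi'
          · have hieq : i = m := by omega
            rw [if_pos (by omega : i ≤ m), if_neg (by omega : ¬ i + 1 ≤ m), hieq]
            exact hyadj
  obtain ⟨x, hmem, hinj, hadj⟩ := path (2*k-2) (le_refl _)
  have hx22 : x (2*k-2) ∈ A := (hmem _ (le_refl _)).1 ⟨k-1, by omega⟩
  set usedB := ((range (2*k-2)).filter (fun i => ¬ Even i)).image x with husedB
  have husedBcard : usedB.card ≤ k - 1 :=
    le_trans Finset.card_image_le (hparB _ (le_refl _))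
  obtain ⟨u, huB, huadj, huused⟩ := step B A hMA (by omega) (x (2*k-2)) hx22 usedB husedBcard
  have hune : ∀ p, p ≤ 2*k-2 → u ≠ x p := by
    intro p hp heq
    by_cases hpe : Even p
    · have : x p ∈ A := (hmem p hp).1 hpe
      exact (Finset.disjoint_right.mp hAB huB) (heq ▸ this)
    · apply huused
      rw [husedB]
      have hplt : p < 2*k-2 := by
        rcases Nat.not_even_iff_odd.mp hpe with ⟨c, hc⟩; omega
      exact Finset.mem_image.mpr ⟨p, by
        simp only [Finset.mem_filter, Finset.mem_range]
        exact ⟨hplt, hpe⟩, heq.symm⟩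
  have hx0 : x 0 ∈ A := (hmem 0 (by omega)).1 Even.zero
  -- crossing index
  set good := (range (k-1)).filter
    (fun i => G.Adj u (x (2*i)) ∧ G.Adj (x 0) (x (2*i+1))) with hgood
  set bad1 := (range (k-1)).filter (fun i => ¬ G.Adj u (x (2*i))) with hbad1
  set bad2 := (range (k-1)).filter (fun i => ¬ G.Adj (x 0) (x (2*i+1))) with hbad2
  have hb1 : B.card + bad1.card ≤ 2*k-1 := by
    have hsub := hMB u huB A (Finset.Subset.refl A)
    have hle : bad1.card ≤ (A.filter (fun w => ¬ G.Adj u w)).card := by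
      apply Finset.card_le_card_of_injOn (fun i => x (2*i))
      · intro i hi
        simp only [hbad1, Finset.mem_coe, Finset.mem_filter, Finset.mem_range] at hi ⊢
        exact ⟨(hmem (2*i) (by omega)).1 ⟨i, by omega⟩, hi.2⟩
      · intro i hi j hj hij
        simp only [hbad1, Finset.coe_filter, Set.mem_setOf_eq, Finset.mem_range] at hi hj
        have hij' : x (2*i) = x (2*j) := hij
        by_contra hne
        exact hinj (2*i) (2*j) (by omega) (by omega) (by omega) hij'
    omega
  have hb2 : A.card + bad2.card ≤ 2*k-1 := by
    have hsub := hMA (x 0) hx0 B (Finset.Subset.refl B)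
    have hle : bad2.card ≤ (B.filter (fun w => ¬ G.Adj (x 0) w)).card := by
      apply Finset.card_le_card_of_injOn (fun i => x (2*i+1))
      · intro i hi
        simp only [hbad2, Finset.mem_coe, Finset.mem_filter, Finset.mem_range] at hi ⊢
        refine ⟨(hmem (2*i+1) (by omega)).2 ?_, hi.2⟩
        intro ⟨c, hc⟩; omega
      · intro i hi j hj hij
        simp only [hbad2, Finset.coe_filter, Set.mem_setOf_eq, Finset.mem_range] at hi hj
        have hij' : x (2*i+1) = x (2*j+1) := hij
        by_contra hne
        exact hinj (2*i+1) (2*j+1) (by omega) (by omega) (by omega) hij'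
    omega
  have hcover : range (k-1) ⊆ good ∪ bad1 ∪ bad2 := by
    intro j hj
    simp only [hgood, hbad1, hbad2, Finset.mem_union, Finset.mem_filter]
    by_cases h1 : G.Adj u (x (2*j))
    · by_cases h2 : G.Adj (x 0) (x (2*j+1))
      · exact Or.inl (Or.inl ⟨hj, h1, h2⟩)
      · exact Or.inr ⟨hj, h2⟩
    · exact Or.inl (Or.inr ⟨hj, h1⟩)
  have hgoodpos : 0 < good.card := by
    have h1 := Finset.card_le_card hcover
    have h2 := Finset.card_union_le (good ∪ bad1) bad2
    have h3 := Finset.card_union_le good bad1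
    simp only [Finset.card_range] at h1
    omega
  obtain ⟨i, hi⟩ := Finset.card_pos.mp hgoodpos
  rw [hgood] at hi
  simp only [Finset.mem_filter, Finset.mem_range] at hi
  have hik := hi.1
  have hiu := hi.2.1
  have hix0 := hi.2.2
  have hik' : i ≤ k - 2 := by omega
  -- the cycle
  refine ⟨fun t => if t.val ≤ 2*i then x t.val
    else if t.val = 2*i+1 then u else x (2*k + 2*i - t.val), ?_, ?_, ?_⟩
  · -- injective
    intro t1 t2 heq
    simp only at heq
    apply Fin.ext
    have hlt1 := t1.isLt
    have hlt2 := t2.isLt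
    by_cases c11 : t1.val ≤ 2*i <;> by_cases c21 : t2.val ≤ 2*i
    · rw [if_pos c11, if_pos c21] at heq
      by_contra hne
      exact hinj _ _ (by omega) (by omega) hne heq
    · rw [if_pos c11, if_neg c21] at heq
      by_cases c22 : t2.val = 2*i+1
      · rw [if_pos c22] at heq
        exact absurd heq.symm (hune t1.val (by omega))
      · rw [if_neg c22] at heq
        by_contra hne
        exact hinj _ _ (by omega) (by omega) (by omega) heq
    · rw [if_neg c11, if_pos c21] at heq
      by_cases c12 : t1.val = 2*i+1
      · rw [if_pos c12] at heq
        exact absurd heq (hune t2.val (by omega))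
      · rw [if_neg c12] at heq
        by_contra hne
        exact hinj _ _ (by omega) (by omega) (by omega) heq
    · rw [if_neg c11, if_neg c21] at heq
      by_cases c12 : t1.val = 2*i+1 <;> by_cases c22 : t2.val = 2*i+1
      · omega
      · rw [if_pos c12, if_neg c22] at heq
        exact absurd heq (hune _ (by omega))
      · rw [if_neg c12, if_pos c22] at heq
        exact absurd heq.symm (hune _ (by omega))
      · rw [if_neg c12, if_neg c22] at heq
        by_contra hne
        exact hinj _ _ (by omega) (by omega) (by omega) heq
  · -- membership
    intro t
    simp only
    by_cases c1 : t.val ≤ 2*i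
    · rw [if_pos c1]
      rcases Nat.even_or_odd t.val with he | ho
      · exact Finset.mem_union_left _ ((hmem t.val (by omega)).1 he)
      · exact Finset.mem_union_right _ ((hmem t.val (by omega)).2
          (Nat.not_even_iff_odd.mpr ho))
    · rw [if_neg c1]
      by_cases c2 : t.val = 2*i+1
      · rw [if_pos c2]; exact Finset.mem_union_right _ huB
      · rw [if_neg c2]
        have hlt := t.isLt
        rcases Nat.even_or_odd (2*k + 2*i - t.val) with he | ho
        · exact Finset.mem_union_left _ ((hmem _ (by omega)).1 he)
        · exact Finset.mem_union_right _ ((hmem _ (by omega)).2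
            (Nat.not_even_iff_odd.mpr ho))
  · -- adjacency
    intro s t hrel
    simp only
    have hlts := s.isLt
    have hltt := t.isLt
    rcases hrel with hsucc | ⟨ht0, hs⟩
    · by_cases c1 : s.val ≤ 2*i
      · rw [if_pos c1]
        by_cases c1' : s.val = 2*i
        · rw [if_neg (by omega : ¬ t.val ≤ 2*i), if_pos (by omega : t.val = 2*i+1), c1']
          exact hiu.symm
        · rw [if_pos (by omega : t.val ≤ 2*i), ← hsucc]
          exact hadj s.val (by omega)
      · by_cases c2 : s.val = 2*i+1
        · rw [if_neg c1, if_pos c2,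
            if_neg (by omega : ¬ t.val ≤ 2*i), if_neg (by omega : ¬ t.val = 2*i+1),
            show 2*k + 2*i - t.val = 2*k - 2 by omega]
          exact huadj.symm
        · rw [if_neg c1, if_neg c2,
            if_neg (by omega : ¬ t.val ≤ 2*i), if_neg (by omega : ¬ t.val = 2*i+1)]
          have harr : 2*k + 2*i - s.val = (2*k + 2*i - t.val) + 1 := by omega
          rw [harr]
          exact (hadj (2*k + 2*i - t.val) (by omega)).symm
    · rw [if_neg (by omega : ¬ s.val ≤ 2*i), if_neg (by omega : ¬ s.val = 2*i+1),
        if_pos (by omega : t.val ≤ 2*i),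
        show 2*k + 2*i - s.val = 2*i+1 by omega, ht0]
      exact hix0.symm

/-- Under the standing hypotheses, no neighborhood subgraph G[N(v)] is bipartite. -/
theorem stmt10 {V : Type*} [Fintype V] (G : SimpleGraph V)
    (n : ℕ) (hn : 6 ≤ n) (he : Even n)
    (hcard : Fintype.card V = 5 * n / 2 - 1)
    (hW : ¬ Contains G (wheelGraph n))
    (hS : ¬ Contains Gᶜ (_root_.starGraph n)) :
    ∀ v : V, ¬ (G.induce (G.neighborSet v)).Colorable 2 := by
  classical
  intro v hcol
  obtain ⟨C⟩ := hcol
  obtain ⟨k0, hk0⟩ := he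
  have h2k : n = 2 * k0 := by omega
  subst h2k
  have hk : 3 ≤ k0 := by omega
  have hcardV : Fintype.card V = 5*k0 - 1 := by rw [hcard]; omega
  have hD : ∀ u : V, (Finset.univ.filter (fun w => w ≠ u ∧ ¬ G.Adj u w)).card ≤ 2*k0 - 2 := by
    intro u
    have := nonadj_bound G (2*k0) (by omega) hS u
    omega
  set Nv := Finset.univ.filter (fun w => G.Adj v w) with hNv
  set col : V → Fin 2 := fun u => if h : G.Adj v u then C ⟨u, h⟩ else 0 with hcol'
  set A := Nv.filter (fun u => col u = 0) with hA
  set B := Nv.filter (fun u => col u = 1) with hB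
  have hABdisj : Disjoint A B := by
    rw [Finset.disjoint_left]
    intro w hw hw'
    rw [hA, Finset.mem_filter] at hw
    rw [hB, Finset.mem_filter] at hw'
    rw [hw.2] at hw'
    exact absurd hw'.2 (by decide)
  have hUnion : A ∪ B = Nv := by
    apply Finset.Subset.antisymm
    · intro w hw
      rcases Finset.mem_union.mp hw with h | h
      · exact (Finset.mem_filter.mp h).1
      · exact (Finset.mem_filter.mp h).1
    · intro w hw
      rcases (by decide : ∀ c : Fin 2, c = 0 ∨ c = 1) (col w) with h | h
      · exact Finset.mem_union_left _ (Finset.mem_filter.mpr ⟨hw, h⟩)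
      · exact Finset.mem_union_right _ (Finset.mem_filter.mpr ⟨hw, h⟩)
  have hAdjNv : ∀ w ∈ Nv, G.Adj v w := fun w hw => (Finset.mem_filter.mp hw).2
  have hIndep : ∀ P, (P = A ∨ P = B) → ∀ u ∈ P, ∀ w ∈ P, u ≠ w → ¬ G.Adj u w := by
    intro P hP u hu w hw hne hadj
    have huNv : u ∈ Nv := by rcases hP with h | h <;> subst h <;>
      exact (Finset.mem_filter.mp hu).1
    have hwNv : w ∈ Nv := by rcases hP with h | h <;> subst h <;>
      exact (Finset.mem_filter.mp hw).1
    have hu' : G.Adj v u := hAdjNv u huNv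
    have hw' : G.Adj v w := hAdjNv w hwNv
    have hiadj : (G.induce (G.neighborSet v)).Adj ⟨u, hu'⟩ ⟨w, hw'⟩ := by
      simp [hadj, hu', hw']
    have hvalid := C.valid hiadj
    have hcu : col u = C ⟨u, hu'⟩ := by rw [hcol']; simp [hu']
    have hcw : col w = C ⟨w, hw'⟩ := by rw [hcol']; simp [hw']
    have : col u = col w := by
      rcases hP with h | h <;> subst h
      · rw [(Finset.mem_filter.mp hu).2, (Finset.mem_filter.mp hw).2]
      · rw [(Finset.mem_filter.mp hu).2, (Finset.mem_filter.mp hw).2]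
    rw [hcu, hcw] at this
    exact hvalid this
  have hNvcard : 3*k0 ≤ Nv.card := by
    have hcover : Finset.univ ⊆
        (Finset.univ.filter (fun w => w ≠ v ∧ ¬ G.Adj v w)) ∪ ({v} ∪ Nv) := by
      intro w _
      simp only [Finset.mem_union, Finset.mem_filter, Finset.mem_singleton, Finset.mem_univ,
        true_and, hNv]
      by_cases h1 : G.Adj v w
      · exact Or.inr (Or.inr h1)
      · by_cases h2 : w = v
        · exact Or.inr (Or.inl h2)
        · exact Or.inl ⟨h2, h1⟩
    have h1 := Finset.card_le_card hcover
    have h2 := Finset.card_union_le (Finset.univ.filter (fun w => w ≠ v ∧ ¬ G.Adj v w))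
      ({v} ∪ Nv)
    have h3 := Finset.card_union_le ({v} : Finset V) Nv
    have h4 := hD v
    rw [Finset.card_univ, hcardV] at h1
    simp only [Finset.card_singleton] at h3
    omega
  have hMiss : ∀ P Q, (P = A ∧ Q = B ∨ P = B ∧ Q = A) →
      ∀ u ∈ P, ∀ S ⊆ Q, P.card + (S.filter (fun w => ¬ G.Adj u w)).card ≤ 2*k0 - 1 := by
    intro P Q hPQ u hu S hSQ
    have hPQdisj : Disjoint P Q := by
      rcases hPQ with ⟨h1, h2⟩ | ⟨h1, h2⟩ <;> subst h1 <;> subst h2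
      · exact hABdisj
      · exact hABdisj.symm
    have hsub : (P.erase u) ∪ S.filter (fun w => ¬ G.Adj u w) ⊆
        Finset.univ.filter (fun w => w ≠ u ∧ ¬ G.Adj u w) := by
      intro w hw
      simp only [Finset.mem_filter, Finset.mem_univ, true_and]
      rcases Finset.mem_union.mp hw with h | h
      · have h1 := Finset.mem_of_mem_erase h
        have h2 := Finset.ne_of_mem_erase h
        refine ⟨h2, ?_⟩
        intro hadj
        exact hIndep P (by tauto) u hu w h1 (Ne.symm h2) hadj
      · have h1 := Finset.mem_filter.mp h
        refine ⟨?_, h1.2⟩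
        intro heq
        exact (Finset.disjoint_left.mp hPQdisj hu) (heq ▸ hSQ h1.1)
    have hdisj : Disjoint (P.erase u) (S.filter (fun w => ¬ G.Adj u w)) := by
      apply Finset.disjoint_of_subset_left (Finset.erase_subset u P)
      apply Finset.disjoint_of_subset_right (le_trans (Finset.filter_subset _ S) hSQ)
      exact hPQdisj
    have hcards := Finset.card_le_card hsub
    rw [Finset.card_union_of_disjoint hdisj, Finset.card_erase_of_mem hu] at hcards
    have := hD u
    have hP1 : 1 ≤ P.card := Finset.card_pos.mpr ⟨u, hu⟩
    omega
  have hsum : 3*k0 ≤ A.card + B.card := by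
    rw [← Finset.card_union_of_disjoint hABdisj, hUnion]; exact hNvcard
  have hAne : A.Nonempty := by
    rcases Finset.eq_empty_or_nonempty A with h | h
    · exfalso
      have hBne : B.Nonempty := Finset.card_pos.mp (by rw [h] at hsum; simp at hsum; omega)
      obtain ⟨u, hu⟩ := hBne
      have := hMiss B A (Or.inr ⟨rfl, rfl⟩) u hu ∅ (Finset.empty_subset _)
      simp at this
      rw [h] at hsum
      simp at hsum
      omega
    · exact h
  obtain ⟨c, hcinj, hcmem, hcadj⟩ := greedy_cycle G k0 hk A B hABdisj
    (fun u hu S hS' => hMiss A B (Or.inl ⟨rfl, rfl⟩) u hu S hS')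
    (fun u hu S hS' => hMiss B A (Or.inr ⟨rfl, rfl⟩) u hu S hS') hsum hAne
  have hcNv : ∀ t, G.Adj v (c t) := by
    intro t
    apply hAdjNv
    rw [← hUnion]
    exact hcmem t
  have key : ∀ M N : ℕ, 0 < N → M < 2*N → M % N = 1 → M = 1 ∨ M = N + 1 := by
    intro M N hN hM h
    rcases Nat.lt_or_ge M N with h1 | h1
    · left; rwa [Nat.mod_eq_of_lt h1] at h
    · right
      have h2 : M - N < N := by omega
      have h3 : (M - N) % N = M % N := by
        conv_rhs => rw [show M = (M - N) + N by omega]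
        rw [Nat.add_mod_right]
      rw [Nat.mod_eq_of_lt h2] at h3
      omega
  have hcyc : ∀ s t : Fin (2*k0), (SimpleGraph.cycleGraph (2*k0)).Adj s t → G.Adj (c s) (c t) := by
    intro s t h
    rw [SimpleGraph.cycleGraph_adj'] at h
    have hlts := s.isLt
    have hltt := t.isLt
    rcases h with h | h
    · rw [Fin.sub_def] at h
      simp only at h
      have hkey := key (2*k0 - t.val + s.val) (2*k0) (by omega) (by omega) h
      have hpat : t.val + 1 = s.val ∨ (s.val = 0 ∧ t.val = 2*k0 - 1) := by omega
      exact (hcadj t s hpat).symm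
    · rw [Fin.sub_def] at h
      simp only at h
      have hkey := key (2*k0 - s.val + t.val) (2*k0) (by omega) (by omega) h
      have hpat : s.val + 1 = t.val ∨ (t.val = 0 ∧ s.val = 2*k0 - 1) := by omega
      exact hcadj s t hpat
  apply hW
  refine ⟨⟨fun o => o.elim v c, ?_⟩, ?_⟩
  · rintro (_ | t1) (_ | t2) heq <;> simp only [Option.elim] at heq
    · rfl
    · exact absurd heq (G.ne_of_adj (hcNv t2))
    · exact absurd heq.symm (G.ne_of_adj (hcNv t1))
    · exact congrArg some (hcinj heq)
  · intro p q hpq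
    rw [wheelGraph, SimpleGraph.fromRel_adj] at hpq
    obtain ⟨hne, hrel⟩ := hpq
    rcases hrel with h | h
    · rcases h with hnone | ⟨a, b, hp, hq, hab⟩
      · subst hnone
        match q with
        | none => exact absurd rfl hne
        | some t => exact hcNv t
      · subst hp; subst hq
        exact hcyc a b hab
    · rcases h with hnone | ⟨a, b, hq, hp, hab⟩
      · subst hnone
        match p with
        | none => exact absurd rfl hne
        | some t => exact (hcNv t).symm
      · subst hp; subst hq
        exact (hcyc a b hab).symm
end

section
/- Let n ≥ 6 be even and let G be a graph of order 5n/2 − 1 containing no W_n whose complement contains no S_n. If for some vertex t the induced subgraph H_t = G[N(t)] is disconnected, then H_t has exactly two connected components. -/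
open SimpleGraph

private lemma degree_bound {V : Type*} [Fintype V] [DecidableEq V] (G : SimpleGraph V)
    [DecidableRel G.Adj] (n : ℕ)
    (hS : ¬ Contains Gᶜ (_root_.starGraph n)) (v : V) :
    Gᶜ.degree v ≤ n - 2 := by
  by_contra h
  push_neg at h
  have h' : n - 1 ≤ (Gᶜ.neighborFinset v).card := by
    have : Gᶜ.degree v = (Gᶜ.neighborFinset v).card := rfl
    omega
  obtain ⟨s, hs, hcard⟩ := Finset.exists_subset_card_eq h'
  have e := Finset.equivFinOfCardEq hcard
  have hadj : ∀ x ∈ s, Gᶜ.Adj v x := fun x hx =>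
    (Gᶜ.mem_neighborFinset v x).mp (hs hx)
  apply hS
  refine ⟨⟨Sum.elim (fun _ => v) (fun i => ((e.symm i : s) : V)), ?_⟩, ?_⟩
  · rintro (a | a) (b | b) hab
    · simp [Fin.eq_zero a, Fin.eq_zero b]
    · exfalso
      have := hadj _ (e.symm b).2
      simp only [Sum.elim_inl, Sum.elim_inr] at hab
      rw [hab] at this
      exact this.ne rfl
    · exfalso
      have := hadj _ (e.symm a).2
      simp only [Sum.elim_inl, Sum.elim_inr] at hab
      rw [← hab] at this
      exact this.ne rfl
    · simp only [Sum.elim_inr] at hab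
      have : e.symm a = e.symm b := Subtype.ext hab
      simpa using e.symm.injective this
  · rintro (a | a) (b | b) hab <;>
      simp only [_root_.starGraph, completeBipartiteGraph] at hab <;>
      show Gᶜ.Adj _ _
    · simp at hab
    · exact hadj _ (e.symm b).2
    · exact (hadj _ (e.symm a).2).symm
    · simp at hab


/-- Under the standing hypotheses, if some neighborhood subgraph G[N(t)] is disconnected,
then it has exactly two connected components. -/
theorem stmt11 {V : Type*} [Fintype V] (G : SimpleGraph V)
    (n : ℕ) (hn : 6 ≤ n) (he : Even n)
    (hcard : Fintype.card V = 5 * n / 2 - 1)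
    (hW : ¬ Contains G (wheelGraph n))
    (hS : ¬ Contains Gᶜ (_root_.starGraph n))
    (t : V) (hdis : ¬ (G.induce (G.neighborSet t)).Connected) :
    Nat.card (G.induce (G.neighborSet t)).ConnectedComponent = 2 := by
    classical
  obtain ⟨m, hm⟩ := he
  have hGc : ∀ v : V, Gᶜ.degree v ≤ n - 2 := degree_bound G n hS
  set s := G.neighborSet t with hs
  set H := G.induce s with hH
  set N := Fintype.card ↥s with hN
  have hNdeg : N = G.degree t := card_neighborSet_eq_degree G t
  have hdegt : 3 * m ≤ N := by
    have h1 : Gᶜ.degree t = Fintype.card V - 1 - G.degree t := degree_compl G t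
    have h2 := hGc t
    have h3 : G.degree t < Fintype.card V := G.degree_lt_card_verts t
    omega
  -- minimum degree in H
  have hmindeg : ∀ v : ↥s, N - (n - 1) ≤ H.degree v := by
    intro v
    have hcompl : Hᶜ.degree v ≤ Gᶜ.degree ↑v := by
      refine Finset.card_le_card_of_injOn (fun w => (w : V)) ?_ ?_
      · intro w hw
        rw [Finset.mem_coe, mem_neighborFinset] at hw ⊢
        rw [compl_adj] at hw ⊢
        exact ⟨Subtype.coe_injective.ne hw.1, fun hadj => hw.2 hadj⟩
      · intro a _ b _ hab
        exact Subtype.coe_injective hab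
    have h1 : Hᶜ.degree v = N - 1 - H.degree v := degree_compl H v
    have h2 := hGc ↑v
    have h3 : H.degree v < N := H.degree_lt_card_verts v
    omega
  -- each component has many vertices
  set f : H.ConnectedComponent → Finset ↥s :=
    fun C => Finset.univ.filter (fun v => H.connectedComponentMk v = C) with hf
  have hfcard : ∀ C : H.ConnectedComponent, N - (n - 1) + 1 ≤ (f C).card := by
    intro C
    obtain ⟨v, hv⟩ := C.exists_rep
    have hv' : H.connectedComponentMk v = C := hv
    have hsub : insert v (H.neighborFinset v) ⊆ f C := by
      intro w hw
      rw [Finset.mem_insert] at hw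
      rw [hf, Finset.mem_filter]
      refine ⟨Finset.mem_univ _, ?_⟩
      rcases hw with rfl | hw
      · exact hv'
      · rw [mem_neighborFinset] at hw
        rw [← hv']
        exact ConnectedComponent.sound hw.symm.reachable
    have hcard2 : (insert v (H.neighborFinset v)).card = H.degree v + 1 :=
      Finset.card_insert_of_notMem (by simp)
    have h1 := Finset.card_le_card hsub
    have h2 := hmindeg v
    omega
  haveI hfin : Finite H.ConnectedComponent := Quot.finite _
  haveI : Fintype H.ConnectedComponent := Fintype.ofFinite _
  rw [Nat.card_eq_fintype_card]
  -- at least two components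
  have hne : Nonempty ↥s := by
    rw [← Fintype.card_pos_iff]
    omega
  have hge2 : 2 ≤ Fintype.card H.ConnectedComponent := by
    have hpre : ¬ H.Preconnected := fun hp => hdis (SimpleGraph.Connected.mk hp)
    simp only [SimpleGraph.Preconnected] at hpre
    push_neg at hpre
    obtain ⟨u, w, huw⟩ := hpre
    have hne' : H.connectedComponentMk u ≠ H.connectedComponentMk w :=
      fun heq => huw (ConnectedComponent.exact heq)
    exact Fintype.one_lt_card_iff_nontrivial.mpr ⟨_, _, hne'⟩
  -- at most two components
  have hle2 : Fintype.card H.ConnectedComponent ≤ 2 := by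
    by_contra h3
    push_neg at h3
    obtain ⟨u3, hu3, hcard3⟩ := Finset.exists_subset_card_eq (show 3 ≤ (Finset.univ : Finset H.ConnectedComponent).card by
      rw [Finset.card_univ]; omega)
    rw [Finset.card_eq_three] at hcard3
    obtain ⟨a, b, c, hab, hac, hbc, -⟩ := hcard3
    have hdisj1 : Disjoint (f a) (f b) := by
      rw [Finset.disjoint_left]
      intro x hxa hxb
      rw [hf, Finset.mem_filter] at hxa hxb
      exact hab (hxa.2 ▸ hxb.2)
    have hdisj2 : Disjoint (f a ∪ f b) (f c) := by
      rw [Finset.disjoint_left]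
      intro x hxab hxc
      rw [Finset.mem_union] at hxab
      rw [hf, Finset.mem_filter] at hxc
      rcases hxab with hx | hx <;> rw [hf, Finset.mem_filter] at hx
      · exact hac (hx.2 ▸ hxc.2)
      · exact hbc (hx.2 ▸ hxc.2)
    have hunion : (f a ∪ f b ∪ f c).card = (f a).card + (f b).card + (f c).card := by
      rw [Finset.card_union_of_disjoint hdisj2, Finset.card_union_of_disjoint hdisj1]
    have hle : (f a ∪ f b ∪ f c).card ≤ N :=
      (Finset.card_le_univ _).trans_eq (Finset.card_univ)
    have h1 := hfcard a
    have h2 := hfcard b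
    have h3 := hfcard c
    omega
  omega
end

section
/- Let G be a graph in which every vertex has degree at least d, and suppose that for every vertex t the induced subgraph G[N(t)] on the neighborhood of t is disconnected with every component having minimum degree at least c. If t has two adjacent neighbors u, v in one component of G[N(t)], then G has at least |N(t)| + 2(c+1) vertices. -/
open SimpleGraph

private lemma aux_far {V : Type*} (G : SimpleGraph V) (u : V)
    (hdis : ¬ (G.induce (G.neighborSet u)).Connected) (t0 : ↥(G.neighborSet u)) :
    ∃ x : ↥(G.neighborSet u), ¬ (G.induce (G.neighborSet u)).Reachable t0 x := by
  by_contra h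
  push_neg at h
  haveI : Nonempty ↥(G.neighborSet u) := ⟨t0⟩
  exact hdis ⟨fun a b => (h a).symm.trans (h b)⟩

private lemma aux_card {V : Type*} [Fintype V] (G : SimpleGraph V) (c : ℕ) (u : V)
    (hc : ∀ w : G.neighborSet u, c ≤ Nat.card ((G.induce (G.neighborSet u)).neighborSet w))
    (x : ↥(G.neighborSet u)) :
    c + 1 ≤ {y : ↥(G.neighborSet u) | (G.induce (G.neighborSet u)).Reachable y x}.ncard := by
  classical
  set H := G.induce (G.neighborSet u) with hH
  have hsub : insert x (H.neighborSet x) ⊆ {y : ↥(G.neighborSet u) | H.Reachable y x} := by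
    rintro y hy
    rcases Set.mem_insert_iff.1 hy with rfl | hy
    · exact SimpleGraph.Reachable.refl _
    · exact (((H.mem_neighborSet x y).1 hy).symm).reachable
  have hx : x ∉ H.neighborSet x := by
    simp
  have h1 : (insert x (H.neighborSet x)).ncard = (H.neighborSet x).ncard + 1 :=
    Set.ncard_insert_of_notMem hx (Set.toFinite _)
  have h2 : c ≤ (H.neighborSet x).ncard := by
    rw [← Nat.card_coe_set_eq]
    exact hc x
  calc c + 1 ≤ (H.neighborSet x).ncard + 1 := by omega
    _ = (insert x (H.neighborSet x)).ncard := h1.symm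
    _ ≤ _ := Set.ncard_le_ncard hsub (Set.toFinite _)

/-- Counting argument of Subcase 2.1: if every vertex has degree ≥ d, every neighborhood
subgraph is disconnected with all components of minimum degree ≥ c, and some vertex t has
two adjacent neighbors u, v, then G has at least |N(t)| + 2(c+1) vertices. -/
theorem stmt17 {V : Type*} [Fintype V] (G : SimpleGraph V) [DecidableRel G.Adj]
    (d c : ℕ)
    (hd : ∀ v : V, d ≤ G.degree v)
    (hdis : ∀ t : V, ¬ (G.induce (G.neighborSet t)).Connected)
    (hc : ∀ t : V, ∀ w : G.neighborSet t,
      c ≤ Nat.card ((G.induce (G.neighborSet t)).neighborSet w))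
    (t u v : V) (hu : u ∈ G.neighborSet t) (hv : v ∈ G.neighborSet t) (huv : G.Adj u v) :
    G.degree t + 2 * (c + 1) ≤ Fintype.card V := by
  classical
  have htu : t ∈ G.neighborSet u := ((G.mem_neighborSet t u).1 hu).symm
  have htv : t ∈ G.neighborSet v := ((G.mem_neighborSet t v).1 hv).symm
  set Hu := G.induce (G.neighborSet u) with hHu
  set Hv := G.induce (G.neighborSet v) with hHv
  obtain ⟨xu, hxu⟩ := aux_far G u (hdis u) ⟨t, htu⟩
  obtain ⟨xv, hxv⟩ := aux_far G v (hdis v) ⟨t, htv⟩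
  set Su : Set V := Subtype.val '' {y : ↥(G.neighborSet u) | Hu.Reachable y xu} with hSu
  set Sv : Set V := Subtype.val '' {y : ↥(G.neighborSet v) | Hv.Reachable y xv} with hSv
  -- Su is disjoint from N(t)
  have hdisjU : Disjoint Su (G.neighborSet t) := by
    rw [Set.disjoint_left]
    rintro a ⟨y, hy, rfl⟩ haN
    have hadjty : Hu.Adj ⟨t, htu⟩ y := (G.mem_neighborSet t y).1 haN
    exact hxu (hadjty.reachable.trans hy)
  have hdisjV : Disjoint Sv (G.neighborSet t) := by
    rw [Set.disjoint_left]
    rintro a ⟨y, hy, rfl⟩ haN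
    have hadjty : Hv.Adj ⟨t, htv⟩ y := (G.mem_neighborSet t y).1 haN
    exact hxv (hadjty.reachable.trans hy)
  have hdisjUV : Disjoint Su Sv := by
    rw [Set.disjoint_left]
    rintro a ⟨y, hy, rfl⟩ ⟨z, hz, hza⟩
    -- y.val = z.val = a, a ∈ N(u) ∩ N(v)
    have hav : G.Adj v ↑y := by
      rw [← hza]; exact z.2
    have hvu : v ∈ G.neighborSet u := huv
    have h1 : Hu.Adj ⟨t, htu⟩ ⟨v, hvu⟩ := (G.mem_neighborSet t v).1 hv
    have h2 : Hu.Adj ⟨v, hvu⟩ y := hav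
    exact hxu ((h1.reachable.trans h2.reachable).trans hy)
  -- cardinalities
  have hcardU : c + 1 ≤ Su.ncard := by
    rw [hSu, Set.ncard_image_of_injective _ Subtype.val_injective]
    exact aux_card G c u (hc u) xu
  have hcardV : c + 1 ≤ Sv.ncard := by
    rw [hSv, Set.ncard_image_of_injective _ Subtype.val_injective]
    exact aux_card G c v (hc v) xv
  have hdeg : (G.neighborSet t).ncard = G.degree t := by
    rw [← Nat.card_coe_set_eq, Nat.card_eq_fintype_card]
    exact G.card_neighborSet_eq_degree t
  have hunion : (G.neighborSet t ∪ (Su ∪ Sv)).ncard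
      = (G.neighborSet t).ncard + (Su.ncard + Sv.ncard) := by
    rw [Set.ncard_union_eq (by
        rw [Set.disjoint_union_right]
        exact ⟨hdisjU.symm, hdisjV.symm⟩) (Set.toFinite _) (Set.toFinite _),
      Set.ncard_union_eq hdisjUV (Set.toFinite _) (Set.toFinite _)]
  calc G.degree t + 2 * (c + 1)
      = (G.neighborSet t).ncard + ((c + 1) + (c + 1)) := by rw [hdeg]; ring
    _ ≤ (G.neighborSet t).ncard + (Su.ncard + Sv.ncard) := by omega
    _ = (G.neighborSet t ∪ (Su ∪ Sv)).ncard := hunion.symm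
    _ ≤ (Set.univ : Set V).ncard := Set.ncard_le_ncard (Set.subset_univ _) (Set.toFinite _)
    _ = Fintype.card V := by rw [Set.ncard_univ, Nat.card_eq_fintype_card]
end
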